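/- For every integral cache state x, the service cost admits the equivalent expression C(x) = − ∑_{i=1}^{K−1} α_i · min{ k − σ_i, (∑_{j=1}^{i} x_{π_j}) − σ_i } + ∑_{i=1}^{K} c(π_i) · 𝟙{ π_i > N }. -/

import Mathlib

namespace ACAI

/-- `sigma N π i` = number of indices `j ∈ {1,…,i}` with `π j > N`, i.e. the number of
objects among the `i` cheapest that are served from the server. -/
def sigma (N : ℕ) (π : ℕ → ℕ) (i : ℕ) : ℕ :=
  ((Finset.Icc 1 i).filter (fun j => N < π j)).card

/-- `Kmin N k π` = least index `i` with `sigma N π i = k`. -/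
noncomputable def Kmin (N k : ℕ) (π : ℕ → ℕ) : ℕ :=
  sInf {i | sigma N π i = k}

/-- `alpha c π i = c (π (i+1)) - c (π i)`. -/
noncomputable def alpha (c : ℕ → ℝ) (π : ℕ → ℕ) (i : ℕ) : ℝ :=
  c (π (i + 1)) - c (π i)

/-- A fractional cache state: `y ∈ [0,1]^{2N}` with `∑_{i=1}^{N} y i = h` and
`y (i+N) = 1 - y i` for `i ∈ {1,…,N}`. -/
def IsFrac (N h : ℕ) (y : ℕ → ℝ) : Prop :=
  (∀ i ∈ Finset.Icc 1 (2 * N), y i ∈ Set.Icc (0 : ℝ) 1) ∧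
  (∑ i ∈ Finset.Icc 1 N, y i = (h : ℝ)) ∧
  (∀ i ∈ Finset.Icc 1 N, y (i + N) = 1 - y i)

/-- An integral cache state: a fractional cache state with `{0,1}` coordinates. -/
def IsInt (N h : ℕ) (y : ℕ → ℝ) : Prop :=
  IsFrac N h y ∧ ∀ i ∈ Finset.Icc 1 (2 * N), y i = 0 ∨ y i = 1

/-- A request over the augmented catalog `U = {1,…,2N}`: nonnegative costs `c` with
`c (i+N) = c i + cf` for catalog objects `i ∈ {1,…,N}`, and a bijection `π` of
`{1,…,2N}` sorting the costs nondecreasingly and placing each `i ∈ {1,…,N}` before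
`i + N`. -/
def Request (N : ℕ) (cf : ℝ) (c : ℕ → ℝ) (π : ℕ → ℕ) : Prop :=
  (∀ i ∈ Finset.Icc 1 (2 * N), 0 ≤ c i) ∧
  (∀ i ∈ Finset.Icc 1 N, c (i + N) = c i + cf) ∧
  Set.BijOn π (Set.Icc 1 (2 * N)) (Set.Icc 1 (2 * N)) ∧
  (∀ i, 1 ≤ i → i < 2 * N → c (π i) ≤ c (π (i + 1))) ∧
  (∀ j l, j ∈ Set.Icc 1 (2 * N) → l ∈ Set.Icc 1 (2 * N) →
    π j ≤ N → π l = π j + N → j < l)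

/-- The caching gain
`G(y) = ∑_{i=1}^{K-1} α_i · min { k - σ_i, (∑_{j=1}^{i} y_{π j}) - σ_i }`. -/
noncomputable def gain (N k : ℕ) (c : ℕ → ℝ) (π : ℕ → ℕ) (y : ℕ → ℝ) : ℝ :=
  ∑ i ∈ Finset.Icc 1 (Kmin N k π - 1),
    alpha c π i *
      min ((k : ℝ) - sigma N π i) ((∑ j ∈ Finset.Icc 1 i, y (π j)) - sigma N π i)

/-- `Iset N π i = { j ∈ {1,…,i} : π j ≤ N and π j + N ∉ {π 1, …, π i} }`. -/
def Iset (N : ℕ) (π : ℕ → ℕ) (i : ℕ) : Finset ℕ :=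
  (Finset.Icc 1 i).filter (fun j => π j ≤ N ∧ ∀ l ∈ Finset.Icc (1 : ℕ) i, π l ≠ π j + N)

/-- The auxiliary (multilinear) gain
`L(y) = ∑_{i=1}^{K-1} α_i (k - σ_i) (1 - ∏_{j ∈ I_i} (1 - y_{π j}/(k - σ_i)))`. -/
noncomputable def aux (N k : ℕ) (c : ℕ → ℝ) (π : ℕ → ℕ) (y : ℕ → ℝ) : ℝ :=
  ∑ i ∈ Finset.Icc 1 (Kmin N k π - 1),
    alpha c π i * ((k : ℝ) - sigma N π i) *
      (1 - ∏ j ∈ Iset N π i, (1 - y (π j) / ((k : ℝ) - sigma N π i)))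

/-- The service cost
`C(x) = ∑_{i=1}^{2N} c (π i) · x_{π i} · 𝟙{∑_{j=1}^{i-1} x_{π j} < k}`. -/
noncomputable def cost (N k : ℕ) (c : ℕ → ℝ) (π : ℕ → ℕ) (x : ℕ → ℝ) : ℝ :=
  ∑ i ∈ Finset.Icc 1 (2 * N),
    c (π i) * x (π i) *
      (if (∑ j ∈ Finset.Icc 1 (i - 1), x (π j)) < (k : ℝ) then 1 else 0)

/-- The empty-cache allocation: `x₀ i = 0` for `i ∈ {1,…,N}` and `x₀ i = 1` for
`i ∈ {N+1,…,2N}`. -/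
def emptyCache (N : ℕ) : ℕ → ℝ := fun i => if i ≤ N then 0 else 1

-- helpers to be inserted before the theorem
-- helpers to be inserted before the theorem
private lemma icc_succ (i : ℕ) : Finset.Icc 1 (i+1) = insert (i+1) (Finset.Icc 1 i) := by
  ext j; simp only [Finset.mem_Icc, Finset.mem_insert]; omega

private lemma card_filter_succ (p : ℕ → Prop) [DecidablePred p] (i : ℕ) :
    ((Finset.Icc 1 (i+1)).filter p).card
      = ((Finset.Icc 1 i).filter p).card + (if p (i+1) then 1 else 0) := by
  rw [icc_succ, Finset.filter_insert]
  split
  · rw [Finset.card_insert_of_notMem (by simp [Finset.mem_Icc])]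
  · simp

private lemma sigma_succ (N : ℕ) (π : ℕ → ℕ) (i : ℕ) :
    sigma N π (i+1) = sigma N π i + (if N < π (i+1) then 1 else 0) := by
  unfold sigma; exact card_filter_succ _ i

private lemma sigma_zero (N : ℕ) (π : ℕ → ℕ) : sigma N π 0 = 0 := by
  simp [sigma]

private lemma sigma_mono (N : ℕ) (π : ℕ → ℕ) {i j : ℕ} (hij : i ≤ j) :
    sigma N π i ≤ sigma N π j :=
  Finset.card_le_card (Finset.filter_subset_filter _ (Finset.Icc_subset_Icc_right hij))

private lemma nat_ivt (f : ℕ → ℕ) (hf0 : f 0 = 0) (hstep : ∀ i, f (i+1) ≤ f i + 1)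
    (k : ℕ) : ∀ M, k ≤ f M → ∃ i ≤ M, f i = k := by
  intro M
  induction M with
  | zero => intro hk; exact ⟨0, le_rfl, by omega⟩
  | succ M ih =>
    intro hk
    by_cases hc : k ≤ f M
    · obtain ⟨i, hi, hfi⟩ := ih hc
      exact ⟨i, by omega, hfi⟩
    · exact ⟨M+1, le_rfl, by have := hstep M; omega⟩

private lemma abel_sum (g d : ℕ → ℝ) (hd0 : d 0 = 0) :
    ∀ M, ∑ i ∈ Finset.Icc 1 M, g i * (d i - d (i-1)) =
      g M * d M - ∑ i ∈ Finset.Icc 1 (M-1), (g (i+1) - g i) * d i := by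
  intro M
  induction M with
  | zero => simp [hd0]
  | succ M ih =>
    rw [icc_succ, Finset.sum_insert (by simp [Finset.mem_Icc]), ih]
    cases M with
    | zero => simp [hd0]
    | succ M' =>
      rw [show M' + 1 + 1 - 1 = M' + 1 by omega, show M' + 1 - 1 = M' by omega,
        icc_succ M', Finset.sum_insert (by simp [Finset.mem_Icc])]
      ring

open Classical in
private noncomputable def Tc (π : ℕ → ℕ) (x : ℕ → ℝ) (i : ℕ) : ℕ :=
  ((Finset.Icc 1 i).filter (fun j => x (π j) = 1)).card

open Classical in
private lemma Tc_succ (π : ℕ → ℕ) (x : ℕ → ℝ) (i : ℕ) :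
    Tc π x (i+1) = Tc π x i + (if x (π (i+1)) = 1 then 1 else 0) := by
  unfold Tc; exact card_filter_succ _ i

private lemma Tc_zero (π : ℕ → ℕ) (x : ℕ → ℝ) : Tc π x 0 = 0 := by simp [Tc]

private lemma sigma_top (N : ℕ) (π : ℕ → ℕ)
    (hbij : Set.BijOn π (Set.Icc 1 (2*N)) (Set.Icc 1 (2*N))) :
    sigma N π (2*N) = N := by
  unfold sigma
  have h1 : ((Finset.Icc 1 (2*N)).filter (fun j => N < π j)).card
      = (Finset.Icc (N+1) (2*N)).card := by
    apply Finset.card_bij (fun j _ => π j)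
    · intro j hj
      simp only [Finset.mem_filter, Finset.mem_Icc] at hj
      have := hbij.mapsTo (Set.mem_Icc.mpr ⟨hj.1.1, hj.1.2⟩)
      rw [Set.mem_Icc] at this
      simp only [Finset.mem_Icc]; omega
    · intro j hj j' hj' hjj
      simp only [Finset.mem_filter, Finset.mem_Icc] at hj hj'
      exact hbij.injOn (Set.mem_Icc.mpr ⟨hj.1.1, hj.1.2⟩)
        (Set.mem_Icc.mpr ⟨hj'.1.1, hj'.1.2⟩) hjj
    · intro b hb
      simp only [Finset.mem_Icc] at hb
      obtain ⟨j, hj, hpj⟩ := hbij.surjOn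
        (show b ∈ Set.Icc 1 (2*N) from Set.mem_Icc.mpr ⟨by omega, hb.2⟩)
      rw [Set.mem_Icc] at hj
      exact ⟨j, by simp only [Finset.mem_filter, Finset.mem_Icc]; omega, hpj⟩
  rw [h1, Nat.card_Icc]; omega

open Classical in
private lemma sigma_le_T (N : ℕ) (π : ℕ → ℕ) (x : ℕ → ℝ)
    (hbij : Set.BijOn π (Set.Icc 1 (2*N)) (Set.Icc 1 (2*N)))
    (horder : ∀ j l, j ∈ Set.Icc 1 (2*N) → l ∈ Set.Icc 1 (2*N) →
      π j ≤ N → π l = π j + N → j < l)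
    (hxcompl : ∀ i ∈ Finset.Icc 1 N, x (i + N) = 1 - x i)
    (hxint : ∀ i ∈ Finset.Icc 1 (2*N), x i = 0 ∨ x i = 1)
    (i : ℕ) (hi : i ≤ 2*N) :
    sigma N π i ≤ Tc π x i := by
  unfold sigma Tc
  set s := Finset.Icc 1 i with hs
  have hA := Finset.card_filter_add_card_filter_not
    (s := s.filter (fun j => N < π j)) (p := fun j => x (π j) = 1)
  have hB := Finset.card_filter_add_card_filter_not
    (s := s.filter (fun j => x (π j) = 1)) (p := fun j => N < π j)
  have hcomm : ((s.filter (fun j => N < π j)).filter (fun j => x (π j) = 1)).card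
      = ((s.filter (fun j => x (π j) = 1)).filter (fun j => N < π j)).card := by
    rw [Finset.filter_filter, Finset.filter_filter]
    congr 1
    exact Finset.filter_congr (fun j _ => by tauto)
  have hkey : ((s.filter (fun j => N < π j)).filter (fun j => ¬ x (π j) = 1)).card
      ≤ ((s.filter (fun j => x (π j) = 1)).filter (fun j => ¬ N < π j)).card := by
    apply Finset.card_le_card_of_injOn
      (fun j => Function.invFunOn π (Set.Icc 1 (2*N)) (π j - N))
    · intro j hj
      simp only [Finset.mem_coe, Finset.mem_filter, hs, Finset.mem_Icc] at hj
      obtain ⟨⟨⟨hj1, hji⟩, hNj⟩, hxj⟩ := hj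
      have hjM : j ∈ Set.Icc 1 (2*N) := Set.mem_Icc.mpr ⟨hj1, le_trans hji hi⟩
      have hπj := hbij.mapsTo hjM
      rw [Set.mem_Icc] at hπj
      have hbmem : ∃ a ∈ Set.Icc 1 (2*N), π a = π j - N :=
        hbij.surjOn (Set.mem_Icc.mpr ⟨by omega, by omega⟩)
      have hlmem : Function.invFunOn π (Set.Icc 1 (2*N)) (π j - N) ∈ Set.Icc 1 (2*N) :=
        Function.invFunOn_mem hbmem
      have hlval : π (Function.invFunOn π (Set.Icc 1 (2*N)) (π j - N)) = π j - N :=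
        Function.invFunOn_eq hbmem
      have hlj : Function.invFunOn π (Set.Icc 1 (2*N)) (π j - N) < j :=
        horder _ j hlmem hjM (by omega) (by omega)
      rw [Set.mem_Icc] at hlmem
      have hxl : x (π (Function.invFunOn π (Set.Icc 1 (2*N)) (π j - N))) = 1 := by
        have h1 := hxcompl (π j - N) (Finset.mem_Icc.mpr ⟨by omega, by omega⟩)
        have h2 : x (π j) = 0 := by
          rcases hxint (π j) (Finset.mem_Icc.mpr ⟨by omega, by omega⟩) with hv | hv
          · exact hv
          · exact absurd hv hxj
        rw [show π j - N + N = π j by omega, h2] at h1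
        rw [hlval]; linarith
      simp only [Finset.mem_coe, Finset.mem_filter, hs, Finset.mem_Icc]
      exact ⟨⟨⟨hlmem.1, by omega⟩, hxl⟩, by omega⟩
    · intro j hj j' hj' heq
      simp only [Finset.mem_coe, Finset.mem_filter, hs, Finset.mem_Icc] at hj hj'
      obtain ⟨⟨⟨hj1, hji⟩, hNj⟩, hxj⟩ := hj
      obtain ⟨⟨⟨hj1', hji'⟩, hNj'⟩, hxj'⟩ := hj'
      have hjM : j ∈ Set.Icc 1 (2*N) := Set.mem_Icc.mpr ⟨hj1, le_trans hji hi⟩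
      have hjM' : j' ∈ Set.Icc 1 (2*N) := Set.mem_Icc.mpr ⟨hj1', le_trans hji' hi⟩
      have hπj := hbij.mapsTo hjM
      have hπj' := hbij.mapsTo hjM'
      rw [Set.mem_Icc] at hπj hπj'
      have hbmem : ∃ a ∈ Set.Icc 1 (2*N), π a = π j - N :=
        hbij.surjOn (Set.mem_Icc.mpr ⟨by omega, by omega⟩)
      have hbmem' : ∃ a ∈ Set.Icc 1 (2*N), π a = π j' - N :=
        hbij.surjOn (Set.mem_Icc.mpr ⟨by omega, by omega⟩)
      have h1 : π (Function.invFunOn π (Set.Icc 1 (2*N)) (π j - N)) = π j - N :=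
        Function.invFunOn_eq hbmem
      have h2 : π (Function.invFunOn π (Set.Icc 1 (2*N)) (π j' - N)) = π j' - N :=
        Function.invFunOn_eq hbmem'
      have heq' : Function.invFunOn π (Set.Icc 1 (2*N)) (π j - N)
          = Function.invFunOn π (Set.Icc 1 (2*N)) (π j' - N) := heq
      rw [heq', h2] at h1
      exact hbij.injOn hjM hjM' (by omega)
  omega

/-- **Equivalent expression of the service cost (Lemma 1).**
For every integral cache state `x`,
`C(x) = - ∑_{i=1}^{K-1} α_i · min { k - σ_i, (∑_{j=1}^{i} x_{π j}) - σ_i }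
        + ∑_{i=1}^{K} c (π i) · 𝟙{π i > N}`. -/
theorem cost_equivalent_expression
    (N k h : ℕ) (hN : 0 < N) (hk : 0 < k) (hkh : k ≤ h) (hhN : h ≤ N)
    (cf : ℝ) (hcf : 0 < cf) (c : ℕ → ℝ) (π : ℕ → ℕ)
    (hreq : Request N cf c π)
    (x : ℕ → ℝ) (hx : IsInt N h x) :
    cost N k c π x =
      - (∑ i ∈ Finset.Icc 1 (Kmin N k π - 1),
          alpha c π i *
            min ((k : ℝ) - sigma N π i)
              ((∑ j ∈ Finset.Icc 1 i, x (π j)) - sigma N π i))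
      + ∑ i ∈ Finset.Icc 1 (Kmin N k π),
          c (π i) * (if N < π i then 1 else 0) := by
  classical
  obtain ⟨⟨hx01, hxsum, hxcompl⟩, hxint⟩ := hx
  obtain ⟨hc0, hcfadd, hbij, hsort, horder⟩ := hreq
  have hσ0 : sigma N π 0 = 0 := sigma_zero N π
  have hσtop : sigma N π (2*N) = N := sigma_top N π hbij
  have hσstep : ∀ i, sigma N π (i+1) ≤ sigma N π i + 1 := by
    intro i; rw [sigma_succ]; split <;> omega
  have hKne : {i | sigma N π i = k}.Nonempty := by
    obtain ⟨i, _, hi⟩ := nat_ivt (sigma N π) hσ0 hσstep k (2*N) (by omega)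
    exact ⟨i, hi⟩
  have hKval : sigma N π (Kmin N k π) = k := Nat.sInf_mem hKne
  have hKleM : Kmin N k π ≤ 2*N := by
    obtain ⟨i, hiM, hi⟩ := nat_ivt (sigma N π) hσ0 hσstep k (2*N) (by omega)
    exact le_trans (Nat.sInf_le hi) hiM
  have hK1 : 1 ≤ Kmin N k π := by
    rcases Nat.eq_zero_or_pos (Kmin N k π) with hz | hz
    · rw [hz, hσ0] at hKval; omega
    · omega
  have hσlt : ∀ i, i < Kmin N k π → sigma N π i < k := by
    intro i hiK
    have h1 := sigma_mono N π (le_of_lt hiK)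
    rw [hKval] at h1
    have h2 : sigma N π i ≠ k := by
      intro hc
      have h3 : Kmin N k π ≤ i := Nat.sInf_le hc
      omega
    omega
  have hσge : ∀ i, Kmin N k π ≤ i → k ≤ sigma N π i := by
    intro i hiK
    have h1 := sigma_mono N π hiK
    rw [hKval] at h1
    exact h1
  set K := Kmin N k π with hKdef
  have hπmem : ∀ j, j ∈ Finset.Icc 1 (2*N) → π j ∈ Finset.Icc 1 (2*N) := by
    intro j hj
    rw [Finset.mem_Icc] at hj ⊢
    have := hbij.mapsTo (Set.mem_Icc.mpr ⟨hj.1, hj.2⟩)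
    rw [Set.mem_Icc] at this
    exact this
  have hST : ∀ i, i ≤ 2*N → (∑ j ∈ Finset.Icc 1 i, x (π j)) = (Tc π x i : ℝ) := by
    intro i hi
    unfold Tc
    rw [← Finset.sum_boole]
    apply Finset.sum_congr rfl
    intro j hj
    rw [Finset.mem_Icc] at hj
    rcases hxint (π j) (hπmem j (Finset.mem_Icc.mpr ⟨hj.1, le_trans hj.2 hi⟩)) with hv | hv <;>
      simp [hv]
  have hσleT : ∀ i, i ≤ 2*N → sigma N π i ≤ Tc π x i :=
    fun i hi => sigma_le_T N π x hbij horder hxcompl hxint i hi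
  -- Step 1 : cost as a telescoping sum
  have hcost : cost N k c π x
      = ∑ i ∈ Finset.Icc 1 (2*N), c (π i) *
          (((min k (Tc π x i) : ℕ) : ℝ) - ((min k (Tc π x (i-1)) : ℕ) : ℝ)) := by
    unfold cost
    apply Finset.sum_congr rfl
    intro i hi
    rw [Finset.mem_Icc] at hi
    rw [hST (i-1) (by omega)]
    have hTi : Tc π x i = Tc π x (i-1) + (if x (π i) = 1 then 1 else 0) := by
      have := Tc_succ π x (i-1)
      rwa [show i - 1 + 1 = i by omega] at this
    rcases hxint (π i) (hπmem i (Finset.mem_Icc.mpr ⟨hi.1, hi.2⟩)) with hv | hv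
    · rw [if_neg (by rw [hv]; norm_num)] at hTi
      have hTi' : Tc π x i = Tc π x (i-1) := by omega
      rw [hv, hTi']
      ring
    · rw [if_pos hv] at hTi
      rw [hv]
      by_cases hlt : ((Tc π x (i-1) : ℝ)) < (k : ℝ)
      · rw [if_pos hlt]
        have hltn : Tc π x (i-1) < k := by exact_mod_cast hlt
        rw [show min k (Tc π x i) = Tc π x (i-1) + 1 by omega,
            show min k (Tc π x (i-1)) = Tc π x (i-1) by omega]
        push_cast; ring
      · rw [if_neg hlt]
        have hlen : k ≤ Tc π x (i-1) := by
          by_contra hcon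
          exact hlt (by exact_mod_cast Nat.lt_of_not_le hcon)
        rw [show min k (Tc π x i) = k by omega, show min k (Tc π x (i-1)) = k by omega]
        ring
  -- Step 2 : the second sum as a telescoping sum
  have hsecond : (∑ i ∈ Finset.Icc 1 K, c (π i) * (if N < π i then 1 else 0))
      = ∑ i ∈ Finset.Icc 1 (2*N), c (π i) *
          (((min k (sigma N π i) : ℕ) : ℝ) - ((min k (sigma N π (i-1)) : ℕ) : ℝ)) := by
    rw [← Finset.sum_subset (Finset.Icc_subset_Icc_right hKleM) ?hzero]
    case hzero =>
      intro i hiM hiK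
      rw [Finset.mem_Icc] at hiM
      have hKi : K < i := by
        by_contra hcon
        exact hiK (Finset.mem_Icc.mpr ⟨hiM.1, by omega⟩)
      have h1 := hσge i (by omega)
      have h2 := hσge (i-1) (by omega)
      rw [show min k (sigma N π i) = k by omega,
          show min k (sigma N π (i-1)) = k by omega]
      ring
    apply Finset.sum_congr rfl
    intro i hi
    rw [Finset.mem_Icc] at hi
    have hσi : sigma N π i = sigma N π (i-1) + (if N < π i then 1 else 0) := by
      have := sigma_succ N π (i-1)
      rwa [show i - 1 + 1 = i by omega] at this
    have h1 := sigma_mono N π hi.2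
    rw [hKval] at h1
    have h2 : sigma N π (i-1) ≤ k := by
      have := sigma_mono N π (show i - 1 ≤ i by omega)
      omega
    rw [show min k (sigma N π i) = sigma N π i by omega,
        show min k (sigma N π (i-1)) = sigma N π (i-1) by omega]
    by_cases hN : N < π i
    · rw [if_pos hN]
      rw [if_pos hN] at hσi
      rw [hσi]; push_cast; ring
    · rw [if_neg hN]
      rw [if_neg hN] at hσi
      rw [show sigma N π i = sigma N π (i-1) by omega]; ring
  -- Step 3 : Abel summation of the difference
  have habel : (∑ i ∈ Finset.Icc 1 (2*N), c (π i) *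
        (((((min k (Tc π x i) : ℕ) : ℝ) - ((min k (sigma N π i) : ℕ) : ℝ)))
          - ((((min k (Tc π x (i-1)) : ℕ) : ℝ) - ((min k (sigma N π (i-1)) : ℕ) : ℝ)))))
      = c (π (2*N)) * (((min k (Tc π x (2*N)) : ℕ) : ℝ) - ((min k (sigma N π (2*N)) : ℕ) : ℝ))
        - ∑ i ∈ Finset.Icc 1 (2*N-1), (c (π (i+1)) - c (π i)) *
            (((min k (Tc π x i) : ℕ) : ℝ) - ((min k (sigma N π i) : ℕ) : ℝ)) :=
    abel_sum (fun i => c (π i))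
      (fun i => ((min k (Tc π x i) : ℕ) : ℝ) - ((min k (sigma N π i) : ℕ) : ℝ))
      (by simp [Tc_zero, sigma_zero]) (2*N)
  have hdtop : ((min k (Tc π x (2*N)) : ℕ) : ℝ) - ((min k (sigma N π (2*N)) : ℕ) : ℝ) = 0 := by
    have h1 := hσleT (2*N) le_rfl
    rw [hσtop] at h1
    rw [show min k (Tc π x (2*N)) = k by omega, show min k (sigma N π (2*N)) = k by
      rw [hσtop]; omega]
    ring
  have hshrink : (∑ i ∈ Finset.Icc 1 (2*N-1), (c (π (i+1)) - c (π i)) *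
        (((min k (Tc π x i) : ℕ) : ℝ) - ((min k (sigma N π i) : ℕ) : ℝ)))
      = ∑ i ∈ Finset.Icc 1 (K-1), alpha c π i *
          min ((k : ℝ) - sigma N π i) ((∑ j ∈ Finset.Icc 1 i, x (π j)) - sigma N π i) := by
    rw [← Finset.sum_subset (Finset.Icc_subset_Icc_right (show K - 1 ≤ 2*N - 1 by omega)) ?hz]
    case hz =>
      intro i hiM hiK
      rw [Finset.mem_Icc] at hiM
      have hKi : K ≤ i := by
        by_contra hcon
        exact hiK (Finset.mem_Icc.mpr ⟨hiM.1, by omega⟩)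
      have h1 := hσge i hKi
      have h2 := hσleT i (by omega)
      rw [show min k (Tc π x i) = k by omega, show min k (sigma N π i) = k by omega]
      ring
    apply Finset.sum_congr rfl
    intro i hi
    rw [Finset.mem_Icc] at hi
    have hσik := hσlt i (by omega)
    rw [hST i (by omega)]
    simp only [alpha]
    rw [show min k (sigma N π i) = sigma N π i by omega]
    have hmin : min ((k : ℝ) - (sigma N π i : ℝ)) ((Tc π x i : ℝ) - (sigma N π i : ℝ))
        = ((min k (Tc π x i) : ℕ) : ℝ) - ((sigma N π i : ℕ) : ℝ) := by
      rw [min_sub_sub_right]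
      congr 1
      exact (Nat.cast_min k (Tc π x i)).symm
    rw [hmin]
  have hAB : cost N k c π x
      - (∑ i ∈ Finset.Icc 1 K, c (π i) * (if N < π i then 1 else 0))
      = - ∑ i ∈ Finset.Icc 1 (K-1), alpha c π i *
          min ((k : ℝ) - sigma N π i) ((∑ j ∈ Finset.Icc 1 i, x (π j)) - sigma N π i) := by
    have hre : (∑ i ∈ Finset.Icc 1 (2*N),
        (c (π i) * (((min k (Tc π x i) : ℕ) : ℝ) - ((min k (Tc π x (i-1)) : ℕ) : ℝ))
         - c (π i) * (((min k (sigma N π i) : ℕ) : ℝ) - ((min k (sigma N π (i-1)) : ℕ) : ℝ))))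
      = ∑ i ∈ Finset.Icc 1 (2*N), c (π i) *
          ((((min k (Tc π x i) : ℕ) : ℝ) - ((min k (sigma N π i) : ℕ) : ℝ))
           - (((min k (Tc π x (i-1)) : ℕ) : ℝ) - ((min k (sigma N π (i-1)) : ℕ) : ℝ))) :=
      Finset.sum_congr rfl (fun i _ => by ring)
    rw [hcost, hsecond, ← Finset.sum_sub_distrib, hre, habel, hdtop, hshrink]
    ring
  linarith [hAB]


end ACAI
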